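/- For 0 ≤ v ≤ 1, the function g_v(t) = v(1-v)(t-1)/t^(v+1) on (0, ∞) satisfies: g_v is concave on (0, 1 + 2/v] and convex on [1 + 2/v, ∞) (for 0 < v ≤ 1). -/

import Mathlib

open Real Set

private lemma gv_deriv1 (v : ℝ) {t : ℝ} (ht : 0 < t) :
    HasDerivAt (fun t : ℝ => v * (1 - v) * (t - 1) / t ^ (v + 1))
      (v * (1 - v) * ((v + 1) - v * t) / t ^ (v + 2)) t := by
  have hT : (0:ℝ) < t ^ v := Real.rpow_pos_of_pos ht v
  have hne : t ^ (v + 1) ≠ 0 := (Real.rpow_pos_of_pos ht _).ne'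
  have hnum : HasDerivAt (fun t : ℝ => v * (1 - v) * (t - 1)) (v * (1 - v)) t := by
    simpa using ((hasDerivAt_id t).sub_const 1).const_mul (v * (1 - v))
  have hden : HasDerivAt (fun t : ℝ => t ^ (v + 1)) ((v + 1) * t ^ v) t := by
    simpa using Real.hasDerivAt_rpow_const (p := v + 1) (Or.inl ht.ne')
  have := hnum.fun_div hden hne
  refine this.congr_deriv ?_
  rw [Real.rpow_add ht v 1, Real.rpow_add ht v 2, Real.rpow_one,
    show t ^ (2:ℝ) = t ^ (2:ℕ) by rw [← Real.rpow_natCast]; norm_num]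
  field_simp
  ring

private lemma gv_deriv2 (v : ℝ) {t : ℝ} (ht : 0 < t) :
    HasDerivAt (fun t : ℝ => v * (1 - v) * ((v + 1) - v * t) / t ^ (v + 2))
      (v * (1 - v) * (v + 1) * (v * t - (v + 2)) / t ^ (v + 3)) t := by
  have hT : (0:ℝ) < t ^ v := Real.rpow_pos_of_pos ht v
  have hne : t ^ (v + 2) ≠ 0 := (Real.rpow_pos_of_pos ht _).ne'
  have hnum : HasDerivAt (fun t : ℝ => v * (1 - v) * ((v + 1) - v * t))
      (v * (1 - v) * (-v)) t := by
    simpa using (((hasDerivAt_id t).const_mul v).const_sub (v + 1)).const_mul (v * (1 - v))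
  have hden : HasDerivAt (fun t : ℝ => t ^ (v + 2)) ((v + 2) * t ^ (v + 1)) t := by
    have := Real.hasDerivAt_rpow_const (p := v + 2) (x := t) (Or.inl ht.ne')
    convert this using 2
    ring_nf
  have := hnum.fun_div hden hne
  refine this.congr_deriv ?_
  rw [Real.rpow_add ht v 1, Real.rpow_add ht v 2, Real.rpow_add ht v 3, Real.rpow_one,
    show t ^ (2:ℝ) = t ^ (2:ℕ) by rw [← Real.rpow_natCast]; norm_num,
    show t ^ (3:ℝ) = t ^ (3:ℕ) by rw [← Real.rpow_natCast]; norm_num]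
  field_simp
  ring

theorem gv_concave_convex (v : ℝ) (hv0 : 0 < v) (hv1 : v ≤ 1) :
    ConcaveOn ℝ (Set.Ioc (0 : ℝ) (1 + 2 / v))
      (fun t : ℝ => v * (1 - v) * (t - 1) / t ^ (v + 1)) ∧
    ConvexOn ℝ (Set.Ici (1 + 2 / v))
      (fun t : ℝ => v * (1 - v) * (t - 1) / t ^ (v + 1)) := by
  set f : ℝ → ℝ := fun t => v * (1 - v) * (t - 1) / t ^ (v + 1) with hf
  set g1 : ℝ → ℝ := fun t => v * (1 - v) * ((v + 1) - v * t) / t ^ (v + 2) with hg1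
  have hb : (0:ℝ) < 1 + 2 / v := by positivity
  have hvb : v * (1 + 2 / v) = v + 2 := by field_simp
  -- deriv f = g1 on positive reals
  have hderiv : ∀ x : ℝ, 0 < x → deriv f x = g1 x := fun x hx => (gv_deriv1 v hx).deriv
  have heq : ∀ x : ℝ, 0 < x → deriv f =ᶠ[nhds x] g1 := by
    intro x hx
    filter_upwards [eventually_gt_nhds hx] with y hy using hderiv y hy
  have hderiv2 : ∀ x : ℝ, 0 < x →
      deriv^[2] f x = v * (1 - v) * (v + 1) * (v * x - (v + 2)) / x ^ (v + 3) := by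
    intro x hx
    show deriv (deriv f) x = _
    rw [(heq x hx).deriv_eq, (gv_deriv2 v hx).deriv]
  have hcont : ∀ x : ℝ, 0 < x → ContinuousAt f x := by
    intro x hx
    exact (continuousAt_const.mul (continuousAt_id.sub continuousAt_const)).div
      (Real.continuousAt_rpow_const x _ (Or.inl hx.ne'))
      (Real.rpow_pos_of_pos hx _).ne'
  have hdiff : ∀ x : ℝ, 0 < x → DifferentiableAt ℝ f x :=
    fun x hx => (gv_deriv1 v hx).differentiableAt
  have hdiff2 : ∀ x : ℝ, 0 < x → DifferentiableAt ℝ (deriv f) x := by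
    intro x hx
    exact ((heq x hx).differentiableAt_iff).mpr (gv_deriv2 v hx).differentiableAt
  constructor
  · apply concaveOn_of_deriv2_nonpos (convex_Ioc _ _)
    · exact fun x hx => (hcont x hx.1).continuousWithinAt
    · rw [interior_Ioc]
      exact fun x hx => (hdiff x hx.1).differentiableWithinAt
    · rw [interior_Ioc]
      exact fun x hx => (hdiff2 x hx.1).differentiableWithinAt
    · rw [interior_Ioc]
      intro x hx
      rw [hderiv2 x hx.1]
      have h1 : (0:ℝ) < x ^ (v + 3) := Real.rpow_pos_of_pos hx.1 _
      have h2 : v * x < v + 2 := by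
        calc v * x < v * (1 + 2 / v) := by
              exact mul_lt_mul_of_pos_left hx.2 hv0
          _ = v + 2 := hvb
      have hA : 0 ≤ v * (1 - v) * (v + 1) :=
        mul_nonneg (mul_nonneg hv0.le (by linarith)) (by linarith)
      exact div_nonpos_of_nonpos_of_nonneg
        (mul_nonpos_of_nonneg_of_nonpos hA (by linarith)) h1.le
  · apply convexOn_of_deriv2_nonneg (convex_Ici _)
    · exact fun x hx => (hcont x (lt_of_lt_of_le hb hx)).continuousWithinAt
    · rw [interior_Ici]
      exact fun x hx => (hdiff x (lt_trans hb hx)).differentiableWithinAt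
    · rw [interior_Ici]
      exact fun x hx => (hdiff2 x (lt_trans hb hx)).differentiableWithinAt
    · rw [interior_Ici]
      intro x hx
      have hx0 : 0 < x := lt_trans hb hx
      rw [hderiv2 x hx0]
      have h1 : (0:ℝ) < x ^ (v + 3) := Real.rpow_pos_of_pos hx0 _
      have h2 : v + 2 < v * x := by
        calc v + 2 = v * (1 + 2 / v) := hvb.symm
          _ < v * x := mul_lt_mul_of_pos_left hx hv0
      have hA : 0 ≤ v * (1 - v) * (v + 1) :=
        mul_nonneg (mul_nonneg hv0.le (by linarith)) (by linarith)
      exact div_nonneg (mul_nonneg hA (by linarith)) h1.le
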